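/- Let f : [0, T] → ℝ be any bounded function. For t ∈ [0,T] define M_t = sup_{0≤s≤t} f(s), m_t = inf_{0≤s≤t} f(s), Y_t = M_t − f(t), and Ŷ_t = f(t) − m_t. Then for every t ∈ [0,T]: Y_t + Ŷ_t = M_t − m_t = max( sup_{0≤s≤t} Y_s , sup_{0≤s≤t} Ŷ_s ). -/

import Mathlib

open Real

theorem stmt7 (T : ℝ) (hT : 0 ≤ T) (f : ℝ → ℝ)
    (hbdd : ∃ C : ℝ, ∀ s ∈ Set.Icc (0:ℝ) T, |f s| ≤ C)
    (M m Y Yh : ℝ → ℝ)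
    (hM : ∀ t, M t = sSup (f '' Set.Icc (0:ℝ) t))
    (hm : ∀ t, m t = sInf (f '' Set.Icc (0:ℝ) t))
    (hY : ∀ t, Y t = M t - f t)
    (hYh : ∀ t, Yh t = f t - m t)
    (t : ℝ) (ht : t ∈ Set.Icc (0:ℝ) T) :
    Y t + Yh t = M t - m t ∧
    M t - m t = max (sSup (Y '' Set.Icc (0:ℝ) t)) (sSup (Yh '' Set.Icc (0:ℝ) t)) := by
  obtain ⟨C, hC⟩ := hbdd
  have ht0 : (0:ℝ) ≤ t := ht.1
  have htT : t ≤ T := ht.2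
  have hsub : ∀ s ∈ Set.Icc (0:ℝ) t, Set.Icc (0:ℝ) s ⊆ Set.Icc (0:ℝ) T :=
    fun s hs => Set.Icc_subset_Icc le_rfl (hs.2.trans htT)
  have hne : ∀ s ∈ Set.Icc (0:ℝ) t, (f '' Set.Icc (0:ℝ) s).Nonempty :=
    fun s hs => ⟨f 0, 0, ⟨le_rfl, hs.1⟩, rfl⟩
  have hbddA : ∀ s ∈ Set.Icc (0:ℝ) t, BddAbove (f '' Set.Icc (0:ℝ) s) := by
    intro s hs
    exact ⟨C, by rintro x ⟨u, hu, rfl⟩; exact (abs_le.1 (hC u (hsub s hs hu))).2⟩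
  have hbddB : ∀ s ∈ Set.Icc (0:ℝ) t, BddBelow (f '' Set.Icc (0:ℝ) s) := by
    intro s hs
    exact ⟨-C, by rintro x ⟨u, hu, rfl⟩; exact (abs_le.1 (hC u (hsub s hs hu))).1⟩
  have htt : t ∈ Set.Icc (0:ℝ) t := ⟨ht0, le_rfl⟩
  -- f s ≤ M u for 0 ≤ s ≤ u ≤ t
  have hfM : ∀ u ∈ Set.Icc (0:ℝ) t, ∀ s ∈ Set.Icc (0:ℝ) u, f s ≤ M u := by
    intro u hu s hs
    rw [hM]
    exact le_csSup (hbddA u hu) ⟨s, hs, rfl⟩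
  have hmf : ∀ u ∈ Set.Icc (0:ℝ) t, ∀ s ∈ Set.Icc (0:ℝ) u, m u ≤ f s := by
    intro u hu s hs
    rw [hm]
    exact csInf_le (hbddB u hu) ⟨s, hs, rfl⟩
  have hMmono : ∀ s ∈ Set.Icc (0:ℝ) t, M s ≤ M t := by
    intro s hs
    rw [hM, hM]
    exact csSup_le_csSup (hbddA t htt) (hne s hs)
      (Set.image_mono (f := f) (Set.Icc_subset_Icc le_rfl hs.2))
  have hmmono : ∀ s ∈ Set.Icc (0:ℝ) t, m t ≤ m s := by
    intro s hs
    rw [hm, hm]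
    exact csInf_le_csInf (hbddB t htt) (hne s hs)
      (Set.image_mono (f := f) (Set.Icc_subset_Icc le_rfl hs.2))
  -- bounds on Y and Yh
  have hYbound : ∀ s ∈ Set.Icc (0:ℝ) t, Y s ≤ M t - m t := by
    intro s hs
    rw [hY]
    have h1 := hMmono s hs
    have h2 := (hmmono s hs).trans (hmf s hs s ⟨hs.1, le_rfl⟩)
    linarith
  have hYhbound : ∀ s ∈ Set.Icc (0:ℝ) t, Yh s ≤ M t - m t := by
    intro s hs
    rw [hYh]
    have h1 := (hfM s hs s ⟨hs.1, le_rfl⟩).trans (hMmono s hs)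
    have h2 := hmmono s hs
    linarith
  have hYbddA : BddAbove (Y '' Set.Icc (0:ℝ) t) :=
    ⟨M t - m t, by rintro x ⟨u, hu, rfl⟩; exact hYbound u hu⟩
  have hYhbddA : BddAbove (Yh '' Set.Icc (0:ℝ) t) :=
    ⟨M t - m t, by rintro x ⟨u, hu, rfl⟩; exact hYhbound u hu⟩
  refine ⟨by rw [hY, hYh]; ring, le_antisymm ?_ ?_⟩
  · -- M t - m t ≤ max
    have key : ∀ ε > (0:ℝ), M t - m t ≤
        max (sSup (Y '' Set.Icc (0:ℝ) t)) (sSup (Yh '' Set.Icc (0:ℝ) t)) + ε := by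
      intro ε hε
      obtain ⟨x, ⟨s, hs, rfl⟩, hsx⟩ :
          ∃ x ∈ f '' Set.Icc (0:ℝ) t, M t - ε/2 < x := by
        apply exists_lt_of_lt_csSup (hne t htt)
        rw [← hM]; linarith
      obtain ⟨y, ⟨u, hu, rfl⟩, huy⟩ :
          ∃ y ∈ f '' Set.Icc (0:ℝ) t, y < m t + ε/2 := by
        apply exists_lt_of_csInf_lt (hne t htt)
        rw [← hm]; linarith
      rcases le_total s u with hsu | hus
      · -- max before min: drawdown at u is large
        have h1 : f s ≤ M u := hfM u hu s ⟨hs.1, hsu⟩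
        have h2 : Y u ≤ sSup (Y '' Set.Icc (0:ℝ) t) := le_csSup hYbddA ⟨u, hu, rfl⟩
        have h3 : M t - m t - ε ≤ Y u := by rw [hY]; linarith
        have := le_max_left (sSup (Y '' Set.Icc (0:ℝ) t)) (sSup (Yh '' Set.Icc (0:ℝ) t))
        linarith
      · -- min before max: drawup at s is large
        have h1 : m s ≤ f u := hmf s hs u ⟨hu.1, hus⟩
        have h2 : Yh s ≤ sSup (Yh '' Set.Icc (0:ℝ) t) := le_csSup hYhbddA ⟨s, hs, rfl⟩
        have h3 : M t - m t - ε ≤ Yh s := by rw [hYh]; linarith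
        have := le_max_right (sSup (Y '' Set.Icc (0:ℝ) t)) (sSup (Yh '' Set.Icc (0:ℝ) t))
        linarith
    exact le_of_forall_pos_le_add key
  · -- max ≤ M t - m t
    apply max_le
    · exact csSup_le ⟨Y 0, 0, ⟨le_rfl, ht0⟩, rfl⟩ (by rintro x ⟨u, hu, rfl⟩; exact hYbound u hu)
    · exact csSup_le ⟨Yh 0, 0, ⟨le_rfl, ht0⟩, rfl⟩ (by rintro x ⟨u, hu, rfl⟩; exact hYhbound u hu)
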